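/- Let z_0 ≤ z_1 ≤ ⋯ ≤ z_{n−1} be positive integers, and let t_n be the generalized Gončarov polynomials associated with the sequence p_n(x) = x^n and the grid −Z = (−z_0, −z_1, …, −z_{n−1}), i.e., t_0 = 1 and t_n(x) = x^n − Σ_{i=0}^{n−1} C(n,i) · (−z_i)^{n−i} · t_i(x). Then t_n(0) equals the number of z⃗-parking functions of length n. -/

import Mathlib

open Finset

/-- The generalized Gončarov polynomials associated with the sequence `p` and the grid `Z`,
via the recurrence `t_n(x; Z) = p_n(x) - ∑_{i<n} C(n,i) p_{n-i}(z_i) t_i(x; Z)`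
(with `t_0 = p_0 = 1`). -/
noncomputable def gonc {S : Type*} [CommRing S] (p : ℕ → S → S) (Z : ℕ → S) (n : ℕ) (x : S) : S :=
  p n x - ∑ i ∈ (Finset.range n).attach,
    (n.choose i.1 : S) * p (n - i.1) (Z i.1) * gonc p Z i.1 x
termination_by n
decreasing_by exact Finset.mem_range.mp i.2

/-- `f : Fin n → ℕ` is a `z⃗`-parking function: all entries are positive, and for each
`i < n` at least `i + 1` of the entries are `≤ z i`. -/
def IsParking {n : ℕ} (z : ℕ → ℕ) (f : Fin n → ℕ) : Prop :=
  (∀ j, 1 ≤ f j) ∧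
    ∀ i : Fin n, (i : ℕ) + 1 ≤ (univ.filter fun j => f j ≤ z (i : ℕ)).card

section Aux
open scoped Classical

variable (z : ℕ → ℕ)


lemma parking_bound {k : ℕ} {f : Fin k → ℕ} (hf : IsParking z f) (j : Fin k) :
    f j ≤ z (k - 1) := by
  have hk : 0 < k := j.pos
  have h := hf.2 ⟨k - 1, by omega⟩
  simp only at h
  have hcard : (univ.filter fun j => f j ≤ z (k-1)).card = Fintype.card (Fin k) := by
    have := Finset.card_filter_le (univ : Finset (Fin k)) (fun j => f j ≤ z (k-1))
    simp only [Finset.card_univ, Fintype.card_fin] at *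
    omega
  have heq := Finset.eq_univ_of_card _ hcard
  have hj : j ∈ univ.filter fun j => f j ≤ z (k-1) := by rw [heq]; exact Finset.mem_univ j
  exact (Finset.mem_filter.mp hj).2

noncomputable def pkFinset (k m : ℕ) : Finset (Fin k → ℕ) :=
  (Fintype.piFinset fun _ => Finset.Icc 1 m).filter (IsParking z)

lemma ncard_parking (k m : ℕ) (hm : ∀ i, i < k → z i ≤ m) :
    Nat.card {f : Fin k → ℕ // IsParking z f} = (pkFinset z k m).card := by
  have hset : {f : Fin k → ℕ | IsParking z f} = ↑(pkFinset z k m) := by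
    ext f
    simp only [Set.mem_setOf_eq, pkFinset, Finset.coe_filter, Fintype.mem_piFinset,
      Finset.mem_Icc]
    constructor
    · intro hf
      refine ⟨fun j => ⟨hf.1 j, ?_⟩, hf⟩
      exact le_trans (parking_bound z hf j) (hm _ (by have := j.pos; omega))
    · exact fun h => h.2
  rw [show {f : Fin k → ℕ // IsParking z f} = ↥{f : Fin k → ℕ | IsParking z f} from rfl,
    Nat.card_coe_set_eq, hset, Set.ncard_coe_finset]

lemma card_filter_orderIso {k n : ℕ} (S : Finset (Fin n)) (h : S.card = k) (p : Fin n → Prop) :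
    (univ.filter fun a : Fin k => p (S.orderIsoOfFin h a)).card = (S.filter p).card := by
  apply Finset.card_bij (fun a _ => ((S.orderIsoOfFin h a : Fin n)))
  · intro a ha
    simp only [Finset.mem_filter] at ha ⊢
    exact ⟨Finset.coe_mem _, ha.2⟩
  · intro a _ b _ hab
    exact (S.orderIsoOfFin h).injective (Subtype.ext hab)
  · intro j hj
    simp only [Finset.mem_filter] at hj
    refine ⟨(S.orderIsoOfFin h).symm ⟨j, hj.1⟩, ?_, by simp⟩
    simp only [Finset.mem_filter, Finset.mem_univ, true_and, OrderIso.apply_symm_apply]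
    exact hj.2

noncomputable def crit (n : ℕ) (f : Fin n → ℕ) : ℕ :=
  Nat.find (p := fun k => (k < n ∧ (univ.filter fun j => f j ≤ z k).card ≤ k) ∨ k = n)
    ⟨n, Or.inr rfl⟩

lemma crit_eq_iff (n : ℕ) (f : Fin n → ℕ) (i : ℕ) :
    crit z n f = i ↔
      (((i < n ∧ (univ.filter fun j => f j ≤ z i).card ≤ i) ∨ i = n) ∧
        ∀ k < i, ¬((k < n ∧ (univ.filter fun j => f j ≤ z k).card ≤ k) ∨ k = n)) :=
  Nat.find_eq_iff _

lemma crit_le (n : ℕ) (f : Fin n → ℕ) : crit z n f ≤ n :=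
  Nat.find_le (Or.inr rfl)

lemma fiber_card (n m i : ℕ)
    (hmono : ∀ a b, a ≤ b → b < n → z a ≤ z b) (hm : z (n-1) ≤ m) (hi : i < n)
    (S : Finset (Fin n)) (hS : S.card = i) :
    (((Fintype.piFinset fun _ : Fin n => Finset.Icc 1 m).filter
        fun f => crit z n f = i).filter
        fun f => (univ.filter fun j => f j ≤ z i) = S).card
      = (pkFinset z i m).card * (m - z i) ^ (n - i) := by
  have hSc : Sᶜ.card = n - i := by
    rw [Finset.card_compl, hS]; simp
  rw [show (pkFinset z i m).card * (m - z i) ^ (n - i)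
      = ((pkFinset z i m) ×ˢ (Fintype.piFinset fun _ : Fin (n-i) => Finset.Icc (z i + 1) m)).card by
    rw [Finset.card_product, Fintype.card_piFinset]
    simp [Nat.card_Icc]]
  apply Finset.card_bij' (fun f _ => ((fun a => f ((S.orderIsoOfFin hS) a)), (fun b => f ((Sᶜ.orderIsoOfFin hSc) b))))
    (fun gh _ => (fun j : Fin n => if hj : j ∈ S then gh.1 ((S.orderIsoOfFin hS).symm ⟨j, hj⟩)
      else gh.2 ((Sᶜ.orderIsoOfFin hSc).symm ⟨j, Finset.mem_compl.mpr hj⟩)))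
  · -- maps into target
    intro f hf
    simp only [Finset.mem_filter, Fintype.mem_piFinset, Finset.mem_Icc] at hf
    obtain ⟨⟨hfT, hcrit⟩, hSF⟩ := hf
    rw [crit_eq_iff] at hcrit
    have hA : ∀ k < i, k + 1 ≤ (univ.filter fun j => f j ≤ z k).card := by
      intro k hk
      have := hcrit.2 k hk
      push_neg at this
      have := this.1 (lt_trans hk hi)
      omega
    rw [Finset.mem_product]
    constructor
    · rw [pkFinset, Finset.mem_filter]
      refine ⟨by simp only [Fintype.mem_piFinset, Finset.mem_Icc]; exact fun a => hfT _, ?_⟩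
      refine ⟨fun a => (hfT _).1, fun r => ?_⟩
      have hzr : z (r : ℕ) ≤ z i := hmono _ _ (le_of_lt r.2) hi
      have htrans := card_filter_orderIso S hS (fun j => f j ≤ z (r : ℕ))
      have hfe : (S.filter fun j => f j ≤ z (r : ℕ)) = univ.filter fun j => f j ≤ z (r : ℕ) := by
        ext j
        simp only [Finset.mem_filter, Finset.mem_univ, true_and]
        constructor
        · exact fun hh => hh.2
        · intro hh
          refine ⟨?_, hh⟩
          rw [← hSF]
          simp only [Finset.mem_filter, Finset.mem_univ, true_and]
          exact le_trans hh hzr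
      calc (r : ℕ) + 1 ≤ (univ.filter fun j => f j ≤ z (r : ℕ)).card := hA _ r.2
        _ = (S.filter fun j => f j ≤ z (r : ℕ)).card := by rw [hfe]
        _ = (univ.filter fun a : Fin i => f ((S.orderIsoOfFin hS) a) ≤ z (r : ℕ)).card := by
              convert htrans.symm using 2 <;> congr!
    · simp only [Fintype.mem_piFinset, Finset.mem_Icc]
      intro b
      have hb : ((Sᶜ.orderIsoOfFin hSc) b : Fin n) ∉ S := Finset.mem_compl.mp (Finset.coe_mem _)
      have : ¬ (f ((Sᶜ.orderIsoOfFin hSc) b) ≤ z i) := by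
        intro hle
        apply hb
        have hmem : ((Sᶜ.orderIsoOfFin hSc) b : Fin n) ∈ univ.filter (fun j => f j ≤ z i) := by
          simp only [Finset.mem_filter, Finset.mem_univ, true_and]
          exact hle
        rwa [hSF] at hmem
      exact ⟨by omega, (hfT _).2⟩
  · -- maps into source
    rintro ⟨g, h⟩ hgh
    rw [Finset.mem_product] at hgh
    obtain ⟨hg, hh⟩ := hgh
    rw [pkFinset, Finset.mem_filter] at hg
    obtain ⟨hgT, hgpark⟩ := hg
    simp only [Fintype.mem_piFinset, Finset.mem_Icc] at hgT hh
    have hn1 : 0 < n := lt_of_le_of_lt (Nat.zero_le i) hi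
    have hzim : z i ≤ m := le_trans (hmono i (n-1) (by omega) (by omega)) hm
    have hgle : ∀ a : Fin i, g a ≤ z i := fun a =>
      le_trans (parking_bound z hgpark a) (hmono (i-1) i (by omega) hi)
    set F : Fin n → ℕ := fun j : Fin n => if hj : j ∈ S then g ((S.orderIsoOfFin hS).symm ⟨j, hj⟩)
      else h ((Sᶜ.orderIsoOfFin hSc).symm ⟨j, Finset.mem_compl.mpr hj⟩) with hF
    have hFS : ∀ j (hj : j ∈ S), F j = g ((S.orderIsoOfFin hS).symm ⟨j, hj⟩) := fun j hj => dif_pos hj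
    have hFSc : ∀ j (hj : j ∉ S), F j = h ((Sᶜ.orderIsoOfFin hSc).symm ⟨j, Finset.mem_compl.mpr hj⟩) :=
      fun j hj => dif_neg hj
    have hSFF : (univ.filter fun j => F j ≤ z i) = S := by
      ext j
      simp only [Finset.mem_filter, Finset.mem_univ, true_and]
      by_cases hj : j ∈ S
      · rw [hFS j hj]
        exact ⟨fun _ => hj, fun _ => hgle _⟩
      · rw [hFSc j hj]
        have := (hh ((Sᶜ.orderIsoOfFin hSc).symm ⟨j, Finset.mem_compl.mpr hj⟩)).1
        exact ⟨fun hle => absurd hle (by omega), fun hc => absurd hc hj⟩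
    have hcount : ∀ k < i, k + 1 ≤ (univ.filter fun j => F j ≤ z k).card := by
      intro k hk
      have h1 : (k : ℕ) + 1 ≤ (univ.filter fun a : Fin i => g a ≤ z k).card := by
        have := hgpark.2 ⟨k, hk⟩
        simpa using this
      have h2 : (univ.filter fun a : Fin i => g a ≤ z k) =
          (univ.filter fun a : Fin i => F ((S.orderIsoOfFin hS) a) ≤ z k) := by
        apply Finset.filter_congr
        intro a _
        have : F ((S.orderIsoOfFin hS) a) = g a := by
          rw [hFS _ (Finset.coe_mem _)]
          congr 1
          exact (S.orderIsoOfFin hS).symm_apply_apply a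
        rw [this]
      have h3 := card_filter_orderIso S hS (fun j => F j ≤ z k)
      have h4 : (S.filter fun j => F j ≤ z k) ⊆ univ.filter fun j => F j ≤ z k :=
        Finset.filter_subset_filter _ (Finset.subset_univ S)
      calc k + 1 ≤ (univ.filter fun a : Fin i => g a ≤ z k).card := h1
        _ = (univ.filter fun a : Fin i => F ((S.orderIsoOfFin hS) a) ≤ z k).card := by rw [h2]
        _ = (S.filter fun j => F j ≤ z k).card := by convert h3 using 2 <;> congr!
        _ ≤ (univ.filter fun j => F j ≤ z k).card := Finset.card_le_card h4
    simp only [Finset.mem_filter, Fintype.mem_piFinset, Finset.mem_Icc]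
    refine ⟨⟨?_, ?_⟩, hSFF⟩
    · intro j
      by_cases hj : j ∈ S
      · rw [hFS j hj]
        exact ⟨hgpark.1 _, le_trans (hgle _) hzim⟩
      · rw [hFSc j hj]
        have := hh ((Sᶜ.orderIsoOfFin hSc).symm ⟨j, Finset.mem_compl.mpr hj⟩)
        exact ⟨by omega, this.2⟩
    · rw [crit_eq_iff]
      constructor
      · exact Or.inl ⟨hi, by rw [hSFF, hS]⟩
      · intro k hk
        push_neg
        refine ⟨fun _ => ?_, by omega⟩
        have := hcount k hk
        omega
  · -- left inverse
    intro f hf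
    funext j
    by_cases hj : j ∈ S
    · simp only [dif_pos hj]
      congr 1
      have : (S.orderIsoOfFin hS) ((S.orderIsoOfFin hS).symm ⟨j, hj⟩) = ⟨j, hj⟩ := OrderIso.apply_symm_apply _ _
      rw [this]
    · simp only [dif_neg hj]
      congr 1
      have : (Sᶜ.orderIsoOfFin hSc) ((Sᶜ.orderIsoOfFin hSc).symm ⟨j, Finset.mem_compl.mpr hj⟩) = ⟨j, Finset.mem_compl.mpr hj⟩ :=
        OrderIso.apply_symm_apply _ _
      rw [this]
  · -- right inverse
    rintro ⟨g, h⟩ _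
    refine Prod.ext ?_ ?_
    · funext a
      simp only
      rw [dif_pos (Finset.coe_mem ((S.orderIsoOfFin hS) a))]
      congr 1
      exact (S.orderIsoOfFin hS).symm_apply_apply a
    · funext b
      simp only
      rw [dif_neg (Finset.mem_compl.mp (Finset.coe_mem ((Sᶜ.orderIsoOfFin hSc) b)))]
      congr 1
      exact (Sᶜ.orderIsoOfFin hSc).symm_apply_apply b

lemma count_main (n m : ℕ) (hn : 0 < n)
    (hmono : ∀ a b, a ≤ b → b < n → z a ≤ z b) (hm : z (n-1) ≤ m) :
    m ^ n = ∑ i ∈ range (n+1),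
      n.choose i * (pkFinset z i m).card * (m - z i) ^ (n - i) := by
  have hT : (Fintype.piFinset fun _ : Fin n => Finset.Icc 1 m).card = m ^ n := by
    rw [Fintype.card_piFinset]
    simp [Nat.card_Icc]
  rw [← hT]
  rw [Finset.card_eq_sum_card_fiberwise (f := crit z n) (t := range (n+1))
    (fun f _ => Finset.mem_range.mpr (by have := crit_le z n f; omega))]
  apply Finset.sum_congr rfl
  intro i hi
  rw [Finset.mem_range] at hi
  rcases eq_or_lt_of_le (Nat.lt_succ_iff.mp hi) with heq | hlt
  · -- i = n
    subst heq
    have heqset : ((Fintype.piFinset fun _ : Fin i => Finset.Icc 1 m).filter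
        fun f => crit z i f = i) = pkFinset z i m := by
      ext f
      simp only [pkFinset, Finset.mem_filter]
      refine and_congr_right fun hfT => ?_
      rw [crit_eq_iff]
      simp only [Fintype.mem_piFinset, Finset.mem_Icc] at hfT
      constructor
      · rintro ⟨-, hall⟩
        refine ⟨fun j => (hfT j).1, fun r => ?_⟩
        have := hall r r.2
        push_neg at this
        have := this.1 r.2
        omega
      · rintro ⟨-, hpark⟩
        refine ⟨Or.inr rfl, fun k hk => ?_⟩
        push_neg
        refine ⟨fun _ => ?_, by omega⟩
        have := hpark ⟨k, hk⟩
        simp only at this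
        omega
    rw [heqset, Nat.choose_self, Nat.sub_self, pow_zero, one_mul, mul_one]
  · -- i < n
    have hmem : ∀ f ∈ (Fintype.piFinset fun _ : Fin n => Finset.Icc 1 m).filter
        (fun f => crit z n f = i),
        (univ.filter fun j => f j ≤ z i) ∈ Finset.powersetCard i univ := by
      intro f hf
      rw [Finset.mem_filter] at hf
      have hcrit := (crit_eq_iff z n f i).mp hf.2
      rw [Finset.mem_powersetCard]
      refine ⟨Finset.subset_univ _, ?_⟩
      have hub : (univ.filter fun j => f j ≤ z i).card ≤ i := by
        rcases hcrit.1 with h | h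
        · exact h.2
        · omega
      have hlb : i ≤ (univ.filter fun j => f j ≤ z i).card := by
        rcases Nat.eq_zero_or_pos i with h0 | h0
        · omega
        · have hk := hcrit.2 (i-1) (by omega)
          push_neg at hk
          have h1 := hk.1 (by omega)
          have hsub : (univ.filter fun j => f j ≤ z (i-1)) ⊆
              (univ.filter fun j => f j ≤ z i) := by
            intro j hj
            rw [Finset.mem_filter] at hj ⊢
            exact ⟨hj.1, le_trans hj.2 (hmono (i-1) i (by omega) hlt)⟩
          have := Finset.card_le_card hsub
          omega
      omega
    rw [Finset.card_eq_sum_card_fiberwise (f := fun f : Fin n → ℕ => univ.filter fun j => f j ≤ z i)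
      (t := Finset.powersetCard i univ) (fun f hf => hmem f hf)]
    rw [Finset.sum_congr rfl (fun S hS => fiber_card z n m i hmono hm hlt S
      (Finset.mem_powersetCard.mp hS).2)]
    rw [Finset.sum_const, Finset.card_powersetCard, Finset.card_univ, Fintype.card_fin,
      smul_eq_mul, mul_assoc]

lemma parking_identity (n : ℕ) (hn : 0 < n)
    (hmono : ∀ a b, a ≤ b → b < n → z a ≤ z b) :
    ∑ i ∈ range (n+1), (n.choose i : ℚ) *
      (Nat.card {f : Fin i → ℕ // IsParking z f} : ℚ) * (-(z i : ℚ)) ^ (n-i) = 0 := by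
  set P : ℕ → ℚ := fun i => (Nat.card {f : Fin i → ℕ // IsParking z f} : ℚ) with hP
  set p : Polynomial ℚ := ∑ i ∈ range (n+1),
    Polynomial.C ((n.choose i : ℚ) * P i) * (Polynomial.X - Polynomial.C ((z i : ℚ))) ^ (n-i)
    with hp
  have hpq : p = Polynomial.X ^ n := by
    apply Polynomial.eq_of_infinite_eval_eq
    apply Set.Infinite.mono (s := Set.range fun t : ℕ => ((t + z (n-1) : ℕ) : ℚ))
    · rintro x ⟨t, rfl⟩
      have hm : z (n-1) ≤ t + z (n-1) := le_add_self
      have hcount := count_main z n (t + z (n-1)) hn hmono hm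
      simp only [Set.mem_setOf_eq, hp, Polynomial.eval_finset_sum, Polynomial.eval_mul,
        Polynomial.eval_pow, Polynomial.eval_sub, Polynomial.eval_X, Polynomial.eval_C]
      have hcast : ∀ i ∈ range (n+1),
          (n.choose i : ℚ) * P i * (((t + z (n-1) : ℕ) : ℚ) - (z i : ℚ)) ^ (n-i)
          = ((n.choose i * (pkFinset z i (t + z (n-1))).card * ((t + z (n-1)) - z i) ^ (n-i) : ℕ) : ℚ) := by
        intro i hi
        rw [Finset.mem_range] at hi
        have hcard : Nat.card {f : Fin i → ℕ // IsParking z f} = (pkFinset z i (t + z (n-1))).card := by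
          apply ncard_parking
          intro r hr
          calc z r ≤ z (n-1) := by
                rcases Nat.eq_or_lt_of_le (Nat.lt_succ_iff.mp hi) with h | h
                · exact hmono r (n-1) (by omega) (by omega)
                · exact hmono r (n-1) (by omega) (by omega)
            _ ≤ t + z (n-1) := hm
        rcases Nat.eq_or_lt_of_le (Nat.lt_succ_iff.mp hi) with h | h
        · subst h
          simp only [hP]
          rw [hcard]
          simp
        · have hzi : z i ≤ t + z (n-1) := le_trans (hmono i (n-1) (by omega) (by omega)) hm
          simp only [hP]
          rw [hcard]
          push_cast [Nat.cast_sub hzi]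
          ring
      rw [Finset.sum_congr rfl hcast, ← Nat.cast_sum, ← hcount]
      push_cast
      ring
    · apply Set.infinite_range_of_injective
      intro a b hab
      have : ((a + z (n-1) : ℕ) : ℚ) = ((b + z (n-1) : ℕ) : ℚ) := hab
      have := Nat.cast_injective this
      omega
  have h0 := congrArg (Polynomial.eval 0) hpq
  rw [hp] at h0
  simp only [Polynomial.eval_finset_sum, Polynomial.eval_mul, Polynomial.eval_pow,
    Polynomial.eval_sub, Polynomial.eval_X, Polynomial.eval_C] at h0
  rw [zero_pow (by omega : n ≠ 0)] at h0
  rw [← h0]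
  apply Finset.sum_congr rfl
  intro i _
  rw [zero_sub]


end Aux

/-- For `p_n(x) = x^n` and the grid `-Z = (-z_0, -z_1, …)`, the Gončarov polynomial
evaluated at `0` counts the `z⃗`-parking functions of length `n`. -/
theorem goncarov_counts_parking (n : ℕ) (z : ℕ → ℕ)
    (hpos : ∀ i < n, 0 < z i) (hmono : ∀ i j, i ≤ j → j < n → z i ≤ z j) :
    gonc (fun m x => x ^ m) (fun i => -(z i : ℚ)) n (0 : ℚ)
      = (Nat.card { f : Fin n → ℕ // IsParking z f } : ℚ) := by
  induction n using Nat.strong_induction_on with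
  | _ n IH =>
    rcases Nat.eq_zero_or_pos n with rfl | hn
    · rw [gonc]
      simp only [Finset.range_zero, Finset.attach_empty, Finset.sum_empty, pow_zero, sub_zero]
      have hu : ∀ f : Fin 0 → ℕ, IsParking z f :=
        fun f => ⟨fun j => j.elim0, fun i => i.elim0⟩
      haveI : Unique {f : Fin 0 → ℕ // IsParking z f} :=
        ⟨⟨⟨fun _ => 1, hu _⟩⟩, fun a => Subtype.ext (funext fun j => j.elim0)⟩
      rw [Nat.card_unique]
      norm_num
    · rw [gonc]
      rw [Finset.sum_attach (Finset.range n)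
        (fun i => ((n.choose i : ℚ) * (fun m x => x ^ m) (n - i) ((fun i => -(z i : ℚ)) i) *
          gonc (fun m x => x ^ m) (fun i => -(z i : ℚ)) i 0))]
      simp only
      have hIH : ∀ i ∈ range n,
          (n.choose i : ℚ) * (-(z i : ℚ)) ^ (n - i) *
            gonc (fun m x => x ^ m) (fun i => -(z i : ℚ)) i 0
          = (n.choose i : ℚ) * (Nat.card {f : Fin i → ℕ // IsParking z f} : ℚ) *
              (-(z i : ℚ)) ^ (n - i) := by
        intro i hi
        rw [Finset.mem_range] at hi
        rw [IH i hi (fun a ha => hpos a (lt_trans ha hi))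
          (fun a b hab hb => hmono a b hab (lt_trans hb hi))]
        ring
      rw [Finset.sum_congr rfl hIH]
      have hid := parking_identity z n hn (fun a b hab hb => hmono a b hab hb)
      rw [Finset.sum_range_succ, Nat.choose_self, Nat.sub_self, pow_zero] at hid
      rw [zero_pow (by omega : n ≠ 0)]
      push_cast at hid ⊢
      linarith
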